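/- With X = (√(p+p²)cos χ, −p sin χ), C = (2 sin α, 1 − 2cos α), and α_max = arctan(√(2p+p²)): for 0 ≤ α ≤ α_max, 0 ≤ χ ≤ π/2, and 0 < p, one has ‖X − C‖ ≤ 1 + p. In particular at χ = π/2 and α = α_max, ‖X − C‖² = (1+p)². -/

import Mathlib

open Real

lemma key_sqrt (p : ℝ) (hp : 0 < p) :
    Real.sqrt (1 + Real.sqrt (2 * p + p ^ 2) ^ 2) = 1 + p := by
  rw [Real.sq_sqrt (by nlinarith)]
  rw [show 1 + (2 * p + p ^ 2) = (1 + p) ^ 2 by ring]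
  exact Real.sqrt_sq (by linarith)

lemma key_poly2 (p u c w : ℝ) (hp : 0 < p) (hu0 : 0 ≤ u) (hu1 : u ≤ 1)
    (hc : 1 ≤ c * (1 + p)) (hc1 : c ≤ 1) (hw : 0 ≤ w)
    (hw2 : w ^ 2 = p * (1 + p) * (1 - u ^ 2) * (1 - c ^ 2)) :
    4 - p * (1 - u) ^ 2 - 4 * c * (1 + p * u) ≤ 4 * w := by
  set M := 4 - p * (1 - u) ^ 2 - 4 * c * (1 + p * u) with hM
  have hc0 : 0 ≤ c := by nlinarith
  rcases le_or_gt M 0 with h | h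
  · linarith
  · have h1 : M ≤ 4 * p * (1 - u) := by
      nlinarith [mul_nonneg (mul_nonneg hp.le (sub_nonneg.2 hu1)) (sub_nonneg.2 hc1)]
    have h2 : M ≤ 4 * (1 - c) := by nlinarith [mul_nonneg (mul_nonneg hc0 hp.le) hu0]
    have h3 : M ^ 2 ≤ 16 * p * (1 - u) * (1 - c) := by nlinarith
    have h4 : 16 * p * (1 - u) * (1 - c) ≤ 16 * w ^ 2 := by
      rw [hw2]
      have e1 : 0 ≤ p * (1 - u) * (1 - c) := by
        have := mul_nonneg (mul_nonneg hp.le (sub_nonneg.2 hu1)) (sub_nonneg.2 hc1)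
        linarith
      nlinarith [mul_nonneg (mul_nonneg e1 hp.le) hu0, mul_nonneg (mul_nonneg e1 hu0) hc0,
        mul_nonneg (mul_nonneg e1 hp.le) hc0, mul_nonneg e1 hu0, mul_nonneg e1 hc0,
        mul_nonneg e1 hp.le, mul_nonneg (mul_nonneg (mul_nonneg e1 hp.le) hu0) hc0]
    nlinarith [h3, h4, mul_nonneg hw h.le]

/-- With `X = (√(p+p²)cos χ, −p sin χ)` and `C = (2 sin α, 1 − 2 cos α)`:
for `0 ≤ α ≤ arctan √(2p+p²)`, `0 ≤ χ ≤ π/2` and `p > 0` we have `‖X − C‖ ≤ 1 + p`,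
and at `χ = π/2`, `α = arctan √(2p+p²)` the squared norm equals `(1+p)²`. -/
theorem stmt_18 (p : ℝ) (hp : 0 < p) :
    (∀ α χ : ℝ, 0 ≤ α → α ≤ arctan (Real.sqrt (2 * p + p ^ 2)) →
      0 ≤ χ → χ ≤ π / 2 →
      Real.sqrt ((Real.sqrt (p + p ^ 2) * cos χ - 2 * sin α) ^ 2
        + (-p * sin χ - (1 - 2 * cos α)) ^ 2) ≤ 1 + p) ∧
    ((Real.sqrt (p + p ^ 2) * cos (π / 2) - 2 * sin (arctan (Real.sqrt (2 * p + p ^ 2)))) ^ 2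
      + (-p * sin (π / 2) - (1 - 2 * cos (arctan (Real.sqrt (2 * p + p ^ 2))))) ^ 2
      = (1 + p) ^ 2) := by
  have hp1 : (0:ℝ) < 1 + p := by linarith
  have hs2 : Real.sqrt (2 * p + p ^ 2) ^ 2 = 2 * p + p ^ 2 :=
    Real.sq_sqrt (by nlinarith)
  have hcosA : cos (arctan (Real.sqrt (2 * p + p ^ 2))) = 1 / (1 + p) := by
    rw [Real.cos_arctan, key_sqrt p hp]
  have hsinA : sin (arctan (Real.sqrt (2 * p + p ^ 2)))
      = Real.sqrt (2 * p + p ^ 2) / (1 + p) := by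
    rw [Real.sin_arctan, key_sqrt p hp]
  constructor
  · intro α χ hα0 hα1 hχ0 hχ1
    set q := Real.sqrt (p + p ^ 2) with hqdef
    have hq0 : 0 ≤ q := Real.sqrt_nonneg _
    have hq2 : q ^ 2 = p + p ^ 2 := Real.sq_sqrt (by nlinarith)
    have hcα : 1 / (1 + p) ≤ cos α := by
      rw [← hcosA]
      apply Real.cos_le_cos_of_nonneg_of_le_pi hα0 _ hα1
      linarith [Real.arctan_lt_pi_div_two (Real.sqrt (2 * p + p ^ 2)), Real.pi_pos]
    have hcα' : 1 ≤ cos α * (1 + p) := by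
      rw [div_le_iff₀ hp1] at hcα; linarith
    have hcα1 : cos α ≤ 1 := Real.cos_le_one α
    have hsα0 : 0 ≤ sin α := Real.sin_nonneg_of_nonneg_of_le_pi hα0
        (by linarith [Real.arctan_lt_pi_div_two (Real.sqrt (2 * p + p ^ 2)), Real.pi_pos])
    have hsχ0 : 0 ≤ sin χ := Real.sin_nonneg_of_nonneg_of_le_pi hχ0
        (by linarith [Real.pi_pos])
    have hsχ1 : sin χ ≤ 1 := Real.sin_le_one χ
    have hcχ0 : 0 ≤ cos χ := Real.cos_nonneg_of_mem_Icc ⟨by linarith [Real.pi_pos], hχ1⟩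
    have hpyA : sin α ^ 2 = 1 - cos α ^ 2 := by
      have := Real.sin_sq_add_cos_sq α; linarith
    have hpyχ : cos χ ^ 2 = 1 - sin χ ^ 2 := by
      have := Real.sin_sq_add_cos_sq χ; linarith
    set w := q * cos χ * sin α with hwdef
    have hw0 : 0 ≤ w := by positivity
    have hw2 : w ^ 2 = p * (1 + p) * (1 - sin χ ^ 2) * (1 - cos α ^ 2) := by
      rw [hwdef]; rw [← hpyA, ← hpyχ]; rw [mul_pow, mul_pow, hq2]; ring
    have hkey := key_poly2 p (sin χ) (cos α) w hp hsχ0 hsχ1 hcα' hcα1 hw0 hw2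
    have hid : (q * cos χ - 2 * sin α) ^ 2 + (-p * sin χ - (1 - 2 * cos α)) ^ 2
        = (1 + p) ^ 2 - (4 * w
          - (4 - p * (1 - sin χ) ^ 2 - 4 * cos α * (1 + p * sin χ))) := by
      rw [hwdef]
      linear_combination (cos χ) ^ 2 * hq2 + (p + p ^ 2) * hpyχ + 4 * hpyA
    have hle : (q * cos χ - 2 * sin α) ^ 2 + (-p * sin χ - (1 - 2 * cos α)) ^ 2
        ≤ (1 + p) ^ 2 := by rw [hid]; linarith
    calc Real.sqrt ((q * cos χ - 2 * sin α) ^ 2 + (-p * sin χ - (1 - 2 * cos α)) ^ 2)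
        ≤ Real.sqrt ((1 + p) ^ 2) := Real.sqrt_le_sqrt hle
      _ = 1 + p := Real.sqrt_sq hp1.le
  · rw [hcosA, hsinA, Real.cos_pi_div_two, Real.sin_pi_div_two]
    field_simp
    nlinarith [hs2, Real.sq_sqrt (show (0:ℝ) ≤ p * (2 + p) by positivity)]
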